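/- arXiv:0708.3966 — 4 statements merged into one kernel-verified Lean document; each statement's English description precedes it below -/
import Mathlib

section
/- Let K be a field, M an accessible algebraic extension of K (i.e., M is the union of a tower K = K_0 ⊆ K_1 ⊆ K_2 ⊆ ⋯ with each K_{i+1}/K_i Galois), and L a finite Galois extension of K inside a fixed separable closure. Then Gal(L/(L ∩ M)) is a subnormal subgroup of Gal(L/K). -/
/-- A subgroup `H` of `G` is subnormal if there is a finite chain
`H = H₀ ⊴ H₁ ⊴ ⋯ ⊴ Hₖ = G` with each term normal in the next. -/
def Subgroup.IsSubnormal' {G : Type*} [Group G] (H : Subgroup G) : Prop :=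
  ∃ (n : ℕ) (c : Fin (n + 1) → Subgroup G), c 0 = H ∧ c (Fin.last n) = ⊤ ∧
    ∀ i : Fin n, c i.castSucc ≤ c i.succ ∧ ((c i.castSucc).subgroupOf (c i.succ)).Normal

open IntermediateField

section Aux

variable {K Ω : Type*} [Field K] [Field Ω] [Algebra K Ω]

/-- In a (possibly infinite) Galois extension, an element fixed by all automorphisms lies in
the base field. -/
lemma mem_bot_of_forall_fixed [IsGalois K Ω] {y : Ω} (h : ∀ σ : Ω ≃ₐ[K] Ω, σ y = y) :
    y ∈ (⊥ : Subalgebra K Ω) := by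
  by_contra hy
  obtain ⟨y', hne, hconj⟩ := (notMem_iff_exists_ne_and_isConjRoot
    (Algebra.IsSeparable.isSeparable K y) (Normal.splits inferInstance y)).mp hy
  obtain ⟨σ, hσ⟩ := hconj.symm.exists_algEquiv
  exact hne (by rw [← hσ, h σ])

variable [IsSepClosure K Ω]

/-- The restriction homomorphism from `Gal(Ω/F)` to `Gal(L/K)`. -/
noncomputable def resHom (F L : IntermediateField K Ω) [Normal K ↥L] :
    (Ω ≃ₐ[↥F] Ω) →* (↥L ≃ₐ[K] ↥L) :=
  (AlgEquiv.restrictNormalHom (F := K) (K₁ := Ω) ↥L).comp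
    (MonoidHom.mk' (fun τ => τ.restrictScalars K) (fun _ _ => rfl))

lemma resHom_apply (F L : IntermediateField K Ω) [Normal K ↥L] (τ : Ω ≃ₐ[↥F] Ω) (x : ↥L) :
    (resHom F L τ x : Ω) = τ (x : Ω) := by
  have := AlgEquiv.restrictNormalHom_apply (F := K) (K₁ := Ω) L (τ.restrictScalars K) x
  exact this

lemma fixedField_resHom_range (F L : IntermediateField K Ω) [IsGalois K ↥L]
    [FiniteDimensional K ↥L] :
    fixedField (resHom F L).range = F.comap L.val := by
  apply le_antisymm
  · intro x hx
    have hfix : ∀ τ : Ω ≃ₐ[↥F] Ω, τ (x : Ω) = (x : Ω) := by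
      intro τ
      have h1 : resHom F L τ x = x := hx ⟨resHom F L τ, ⟨τ, rfl⟩⟩
      have h2 := resHom_apply F L τ x
      rw [h1] at h2
      exact h2.symm
    obtain ⟨k, hk⟩ := mem_bot_of_forall_fixed (K := ↥F) hfix
    show (x : Ω) ∈ F
    rw [← hk]
    exact k.2
  · rw [IntermediateField.le_iff_le]
    rintro g ⟨τ, rfl⟩
    rw [IntermediateField.mem_fixingSubgroup_iff]
    intro x hx
    have h2 := resHom_apply F L τ x
    have h3 : τ (x : Ω) = (x : Ω) := by
      have hxx : (x : Ω) = algebraMap (↥F) Ω ⟨(x : Ω), hx⟩ := rfl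
      rw [hxx, AlgEquiv.commutes]
    apply Subtype.ext
    rw [h2, h3]

/-- Key stability lemma: if `F'/F` is Galois and `σ ∈ Gal(L/L∩F)` then `σ` maps `L∩F'`
into `F'`. -/
lemma stable_of_galois {F F' : IntermediateField K Ω} (hFF' : F ≤ F')
    [IsGalois ↥F (extendScalars hFF')] (L : IntermediateField K Ω) [IsGalois K ↥L]
    [FiniteDimensional K ↥L] {σ : ↥L ≃ₐ[K] ↥L}
    (hσ : σ ∈ fixingSubgroup (F.comap L.val)) {x : ↥L} (hx : (x : Ω) ∈ F') :
    ((σ x : ↥L) : Ω) ∈ F' := by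
  have hH : (resHom F L).range = fixingSubgroup (F.comap L.val) := by
    rw [← fixedField_resHom_range F L, fixingSubgroup_fixedField]
  rw [← hH] at hσ
  obtain ⟨τ, rfl⟩ := hσ
  rw [resHom_apply]
  set E' := extendScalars hFF' with hE'
  have hxE' : (x : Ω) ∈ E' := hx
  have := AlgEquiv.restrictNormal_commutes τ ↥E' ⟨(x : Ω), hxE'⟩
  have heq : τ (x : Ω) = algebraMap (↥E') Ω ((τ.restrictNormal ↥E') ⟨(x : Ω), hxE'⟩) := by
    rw [this]; rfl
  rw [heq]
  exact ((τ.restrictNormal ↥E') ⟨(x : Ω), hxE'⟩).2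

end Aux

open IntermediateField in
/-- If `M` is an accessible extension of `K` (union of a tower
`K = K₀ ⊆ K₁ ⊆ ⋯` with each step Galois), all inside a fixed separable closure `Ω` of `K`,
and `L/K` is a finite Galois subextension, then `Gal(L/(L ∩ M))` is a subnormal
subgroup of `Gal(L/K)`. -/
theorem fixingSubgroup_isSubnormal_of_accessible (K Ω : Type*) [Field K] [Field Ω]
    [Algebra K Ω] [IsSepClosure K Ω]
    (Ki : ℕ → IntermediateField K Ω) (hmono : Monotone Ki) (h0 : Ki 0 = ⊥)
    (hgal : ∀ i, IsGalois (Ki i) (extendScalars (hmono (Nat.le_succ i))))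
    (M : IntermediateField K Ω) (hM : M = ⨆ i, Ki i)
    (L : IntermediateField K Ω) [IsGalois K L] [FiniteDimensional K L] :
    (IntermediateField.fixingSubgroup (M.comap L.val)).IsSubnormal' := by
  classical
  set E : ℕ → IntermediateField K ↥L := fun i => (Ki i).comap L.val with hE
  have hEmono : Monotone E := fun a b h x hx => by
    exact hmono h hx
  have hE0 : E 0 = ⊥ := by
    ext x
    rw [show (x ∈ E 0 ↔ L.val x ∈ Ki 0) from Iff.rfl, h0, IntermediateField.mem_bot,
      IntermediateField.mem_bot]
    constructor
    · rintro ⟨k, hk⟩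
      refine ⟨k, Subtype.val_injective ?_⟩
      show ((algebraMap K ↥L) k : Ω) = L.val x
      rw [← hk]
      exact (IsScalarTower.algebraMap_apply K ↥L Ω k).symm
    · rintro ⟨k, hk⟩
      refine ⟨k, ?_⟩
      rw [IsScalarTower.algebraMap_apply K ↥L Ω, hk]
      exact rfl
  -- stabilization
  have hbdd : BddAbove (Set.range fun i => Module.finrank K ↥(E i)) := by
    refine ⟨Module.finrank K ↥L, ?_⟩
    rintro _ ⟨i, rfl⟩
    exact (E i).toSubmodule.finrank_le
  obtain ⟨n, hn⟩ : ∃ n, ∀ i, E i ≤ E n := by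
    have hne : (Set.range fun i => Module.finrank K ↥(E i)).Nonempty := ⟨_, ⟨0, rfl⟩⟩
    obtain ⟨n, hn⟩ := Nat.sSup_mem hne hbdd
    refine ⟨n, fun i => ?_⟩
    have h1 : E n ≤ E (max i n) := hEmono (le_max_right i n)
    have h2 : Module.finrank K ↥(E (max i n)) ≤ Module.finrank K ↥(E n) :=
      le_of_le_of_eq (le_csSup hbdd ⟨max i n, rfl⟩) hn.symm
    have heq := IntermediateField.eq_of_le_of_finrank_le h1 h2
    rw [heq]
    exact hEmono (le_max_left i n)
  have hMn : M.comap L.val = E n := by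
    ext x
    show L.val x ∈ M ↔ x ∈ E n
    rw [hM]
    constructor
    · intro hx
      have : L.val x ∈ ⋃ i, ((Ki i : Set Ω)) := by
        rw [← IntermediateField.coe_iSup_of_directed (hmono.directed_le)]
        exact hx
      obtain ⟨_, ⟨i, rfl⟩, hi⟩ := this
      exact hn i hi
    · intro hx
      exact (le_iSup Ki n : Ki n ≤ ⨆ i, Ki i) hx
  rw [hMn]
  -- the chain
  refine ⟨n, fun j => fixingSubgroup (E (n - (j : ℕ))), by simp, ?_, ?_⟩
  · show fixingSubgroup (E (n - (Fin.last n : ℕ))) = ⊤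
    rw [Fin.val_last, Nat.sub_self, hE0, IntermediateField.fixingSubgroup_bot]
  · intro i
    have hlt : (i : ℕ) < n := i.2
    have hcast : (i.castSucc : ℕ) = (i : ℕ) := rfl
    have hsucc : (i.succ : ℕ) = (i : ℕ) + 1 := rfl
    set j := n - ((i : ℕ) + 1) with hj
    have hnum : n - (i : ℕ) = j + 1 := by omega
    have hle : fixingSubgroup (E (j + 1)) ≤ fixingSubgroup (E j) :=
      IntermediateField.fixingSubgroup_antitone (hEmono (Nat.le_succ j))
    constructor
    · show fixingSubgroup (E (n - (i.castSucc : ℕ))) ≤ fixingSubgroup (E (n - (i.succ : ℕ)))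
      rw [hcast, hsucc, hnum]
      exact hle
    · show ((fixingSubgroup (E (n - (i.castSucc : ℕ)))).subgroupOf
        (fixingSubgroup (E (n - (i.succ : ℕ))))).Normal
      rw [hcast, hsucc, hnum]
      haveI := hgal j
      constructor
      rintro ⟨t, htmem⟩ ht ⟨g, hgmem⟩
      rw [Subgroup.mem_subgroupOf] at ht ⊢
      rw [IntermediateField.mem_fixingSubgroup_iff] at ht ⊢
      intro x hx
      have hginv : g⁻¹ ∈ fixingSubgroup (E j) := (fixingSubgroup (E j)).inv_mem hgmem
      have h1 : ((g⁻¹ x : ↥L) : Ω) ∈ Ki (j + 1) :=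
        stable_of_galois (hmono (Nat.le_succ j)) L hginv hx
      have h2 : t (g⁻¹ x) = g⁻¹ x := ht _ h1
      show (g * t * g⁻¹) x = x
      simp only [AlgEquiv.mul_apply]
      rw [h2]
      exact g.apply_symm_apply x
end

section
/- Let E ⊆ F ⊆ F' be fields with F/E and F'/E Galois, and let K_1 ⊆ K_2 be intermediate fields of F/E with K_2/K_1 Galois. Then (K_2 ∩ F')/(K_1 ∩ F') — viewed inside F' — satisfies: Gal(F'/(K_2 ∩ F')) is normal in Gal(F'/(K_1 ∩ F')). -/
open IntermediateField Polynomial in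
/-- Key step: if `σ : F' ≃ₐ[E] F'` fixes `K₁` pointwise and `K₂/K₁` is normal
(with `K₁ ≤ K₂ ≤ F'`), then `σ` maps elements of `K₂` into `K₂`. -/
lemma aux_map_mem (E Ω : Type*) [Field E] [Field Ω] [Algebra E Ω]
    (F' K₁ K₂ : IntermediateField E Ω) (h1 : K₁ ≤ K₂) (h2' : K₂ ≤ F')
    (hnorm : Normal K₁ (extendScalars h1))
    (σ : F' ≃ₐ[E] F') (hσ : ∀ x : F', (x : Ω) ∈ K₁ → σ x = x)
    (x : F') (hx : (x : Ω) ∈ K₂) : ((σ x : F') : Ω) ∈ K₂ := by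
  set T : IntermediateField K₁ Ω := extendScalars h1 with hT
  have hmemT : ∀ a : Ω, a ∈ T ↔ a ∈ K₂ := fun a ↦ mem_extendScalars h1
  set y : T := ⟨(x : Ω), (hmemT _).2 hx⟩ with hy
  have hyint : IsIntegral K₁ y := hnorm.isIntegral y
  set p : Polynomial K₁ := minpoly K₁ y with hp
  have hp0 : p ≠ 0 := minpoly.ne_zero hyint
  have hsplit : Splits (p.map (algebraMap K₁ T)) := hnorm.splits y
  -- the inclusion `K₁ →+* F'`
  have hK1F' : K₁ ≤ F' := h1.trans h2'
  let j : K₁ →+* F' :=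
    { toFun := fun c ↦ ⟨(c : Ω), hK1F' c.2⟩
      map_one' := rfl
      map_mul' := fun _ _ ↦ rfl
      map_zero' := rfl
      map_add' := fun _ _ ↦ rfl }
  have hvj : (F'.val : F' →+* Ω).comp j = algebraMap K₁ Ω := by
    ext c; rfl
  -- `x` is a root of `p` over `K₁` inside `Ω`
  have haev : p.eval₂ (algebraMap K₁ Ω) (x : Ω) = 0 := by
    have := minpoly.aeval K₁ y
    have h2 : (algebraMap T Ω) (Polynomial.aeval y p) = 0 := by rw [this]; simp
    rw [← Polynomial.aeval_algebraMap_apply] at h2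
    simpa [Polynomial.aeval_def] using h2
  -- hence the `F'`-level element `p.eval₂ j x` is zero
  have hu : p.eval₂ j x = 0 := by
    apply Subtype.ext
    show (F'.val : F' →+* Ω) (p.eval₂ j x) = (0 : Ω)
    rw [Polynomial.hom_eval₂ p j (F'.val : F' →+* Ω) x, hvj]
    exact haev
  -- apply `σ`; it fixes the coefficients (in `K₁`)
  have hσj : (σ : F' →+* F').comp j = j := by
    ext c
    exact congrArg Subtype.val (hσ (j c) c.2)
  have hσx : p.eval₂ j (σ x) = 0 := by
    have := Polynomial.hom_eval₂ p j (σ : F' →+* F') x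
    rw [hσj] at this
    show p.eval₂ j ((σ : F' →+* F') x) = 0
    rw [← this, hu, map_zero]
  -- so `σ x` is a root of `p` in `Ω`
  have hroot : p.eval₂ (algebraMap K₁ Ω) ((σ x : F') : Ω) = 0 := by
    have := Polynomial.hom_eval₂ p j (F'.val : F' →+* Ω) (σ x)
    rw [hvj] at this
    show p.eval₂ (algebraMap K₁ Ω) ((F'.val : F' →+* Ω) (σ x)) = 0
    rw [← this, hσx, map_zero]
  -- since `p` splits in `T`, all roots of `p` in `Ω` lie in `T = K₂`
  have hmapmap : p.map (algebraMap K₁ Ω) =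
      (p.map (algebraMap K₁ T)).map (algebraMap T Ω) := by
    rw [Polynomial.map_map, ← IsScalarTower.algebraMap_eq]
  have hmem : ((σ x : F') : Ω) ∈ (p.map (algebraMap K₁ Ω)).roots := by
    rw [Polynomial.mem_roots (Polynomial.map_ne_zero hp0)]
    rw [Polynomial.IsRoot.def, Polynomial.eval_map]
    exact hroot
  rw [hmapmap, hsplit.roots_map _]
    at hmem
  obtain ⟨r, _, hr⟩ := Multiset.mem_map.1 hmem
  rw [← hr]
  exact (hmemT _).1 r.2

open IntermediateField in
/-- Let `E ⊆ F ⊆ F'` be fields (inside a common overfield `Ω`) with `F/E` and `F'/E`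
Galois, and let `K₁ ⊆ K₂` be intermediate fields of `F/E` with `K₂/K₁` Galois. Then
`Gal(F'/(K₂ ∩ F'))` is a normal subgroup of `Gal(F'/(K₁ ∩ F'))`. -/
theorem fixingSubgroup_normal_step (E Ω : Type*) [Field E] [Field Ω] [Algebra E Ω]
    (F F' K₁ K₂ : IntermediateField E Ω)
    [IsGalois E F] [IsGalois E F'] (hFF' : F ≤ F')
    (h1 : K₁ ≤ K₂) (h2 : K₂ ≤ F)
    (hgal : IsGalois K₁ (extendScalars h1)) :
    IntermediateField.fixingSubgroup ((K₂ ⊓ F').comap F'.val) ≤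
      IntermediateField.fixingSubgroup ((K₁ ⊓ F').comap F'.val) ∧
    ((IntermediateField.fixingSubgroup ((K₂ ⊓ F').comap F'.val)).subgroupOf
      (IntermediateField.fixingSubgroup ((K₁ ⊓ F').comap F'.val))).Normal := by
  have hK2F' : K₂ ≤ F' := h2.trans hFF'
  have hK1F' : K₁ ≤ F' := h1.trans hK2F'
  have e2 : K₂ ⊓ F' = K₂ := inf_of_le_left hK2F'
  have e1 : K₁ ⊓ F' = K₁ := inf_of_le_left hK1F'
  rw [e1, e2]
  have hle : IntermediateField.fixingSubgroup (K₂.comap F'.val) ≤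
      IntermediateField.fixingSubgroup (K₁.comap F'.val) := by
    intro σ hσ
    rw [IntermediateField.mem_fixingSubgroup_iff] at hσ ⊢
    intro x hx
    exact hσ x (h1 hx)
  refine ⟨hle, ?_⟩
  constructor
  intro τ hτ g
  rw [Subgroup.mem_subgroupOf] at hτ ⊢
  rw [IntermediateField.mem_fixingSubgroup_iff] at hτ ⊢
  intro x hx
  have hx' : (x : Ω) ∈ K₂ := hx
  set σ : (IntermediateField.fixingSubgroup (K₁.comap F'.val)) := g⁻¹ with hσdef
  have hg : ∀ z : F', (z : Ω) ∈ K₁ → σ.1 z = z := fun z hz ↦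
    (IntermediateField.mem_fixingSubgroup_iff _ σ.1).1 σ.2 z hz
  have key : ((σ.1 x : F') : Ω) ∈ K₂ :=
    aux_map_mem E Ω F' K₁ K₂ h1 hK2F' hgal.to_normal σ.1 hg x hx'
  have hτfix : (τ : F' ≃ₐ[E] F') (σ.1 x) = σ.1 x := hτ _ key
  show ((g * τ * g⁻¹ : _) : F' ≃ₐ[E] F') x = x
  rw [Subgroup.coe_mul, Subgroup.coe_mul]
  show g.1 ((τ : F' ≃ₐ[E] F') (σ.1 x)) = x
  rw [hτfix]
  show (g.1 * σ.1) x = x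
  rw [hσdef, ← Subgroup.coe_mul, mul_inv_cancel, Subgroup.coe_one]
  rfl
end

section
/- Let R ⊆ S be integral domains with quotient fields E ⊆ F such that S = R[z], the minimal polynomial of z over E has coefficients in R, and its discriminant is a unit in R (a ring cover). Then every ring epimorphism φ₀ : R → Ē onto a field Ē extends to a ring epimorphism φ : S → F̄ onto a field F̄ generated over Ē by a root of the image of irr(z, E) under φ₀. -/
/-- Let `R ⊆ S` be integral domains with quotient fields `E ⊆ F`, `S = R[z]`, the minimal
polynomial of `z` over `E` having coefficients in `R` (say equal to the image of a monic
`p ∈ R[X]`) with unit discriminant (expressed by the image of `p` being separable over every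
field, which for a monic polynomial is equivalent to `discr p ∈ Rˣ`): a ring cover.
Then every epimorphism `φ₀ : R → Ē` onto a field extends to an epimorphism `φ : S → F̄`
onto a field `F̄` generated over `Ē` by a root of the image of `irr(z,E)` under `φ₀`. -/
theorem ringCover_extend_epimorphism (R S E F : Type) [CommRing R] [IsDomain R]
    [CommRing S] [IsDomain S] [Field E] [Field F]
    [Algebra R S] [Algebra R E] [Algebra R F] [Algebra S F] [Algebra E F]
    [IsScalarTower R E F] [IsScalarTower R S F]
    [IsFractionRing R E] [IsFractionRing S F]
    (z : S) (hz : Algebra.adjoin R {z} = ⊤)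
    (p : Polynomial R) (hp : p.Monic)
    (hirr : p.map (algebraMap R E) = minpoly E (algebraMap S F z))
    -- unit discriminant: the image of `p` under any homomorphism to a field is separable
    (hdisc : ∀ (k : Type) [Field k] (ψ : R →+* k), (p.map ψ).Separable)
    (Ebar : Type) [Field Ebar] (φ₀ : R →+* Ebar) (hφ₀ : Function.Surjective φ₀) :
    ∃ (Fbar : Type) (_ : Field Fbar) (φ : S →+* Fbar) (ι : Ebar →+* Fbar),
      Function.Surjective φ ∧
      φ.comp (algebraMap R S) = ι.comp φ₀ ∧
      Polynomial.eval₂ ι (φ z) (p.map φ₀) = 0 ∧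
      Subfield.closure (Set.range ι ∪ {φ z}) = ⊤ := by
  classical
  set w : F := algebraMap S F z with hw
  -- `z` is integral over `E`, so `p` has positive degree
  have hint : IsIntegral E w := by
    refine ⟨p.map (algebraMap R E), hp.map _, ?_⟩
    rw [← Polynomial.aeval_def, hirr]
    exact minpoly.aeval E w
  have hdeg : 0 < p.natDegree := by
    have h1 : (p.map (algebraMap R E)).natDegree = p.natDegree :=
      Polynomial.natDegree_map_eq_of_injective (IsFractionRing.injective R E) p
    have h2 := minpoly.natDegree_pos hint
    rw [← hirr] at h2
    omega
  set pbar : Polynomial Ebar := p.map φ₀ with hpbar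
  have hpbarm : pbar.Monic := hp.map φ₀
  have hpbardeg : 0 < pbar.natDegree := by
    rw [hpbar, hp.natDegree_map φ₀]; exact hdeg
  -- pick an irreducible factor `q` of `pbar`
  obtain ⟨q, hqirr, hqdvd⟩ :=
    WfDvdMonoid.exists_irreducible_factor
      (Polynomial.not_isUnit_of_natDegree_pos pbar hpbardeg) hpbarm.ne_zero
  haveI : Fact (Irreducible q) := ⟨hqirr⟩
  -- the target field and the maps
  set Fbar := AdjoinRoot q with hFbar
  set ι : Ebar →+* Fbar := algebraMap Ebar Fbar with hι
  set ψ : Polynomial R →+* Fbar :=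
    (AdjoinRoot.mk q).comp (Polynomial.mapRingHom φ₀) with hψ
  have hψapp : ∀ g : Polynomial R, ψ g = AdjoinRoot.mk q (g.map φ₀) := fun g => rfl
  -- the surjection `R[X] → S`
  set f : Polynomial R →+* S := (Polynomial.aeval z).toRingHom with hf
  have hfsurj : Function.Surjective f := by
    intro s
    have : s ∈ Algebra.adjoin R {z} := hz ▸ trivial
    rw [Algebra.adjoin_singleton_eq_range_aeval] at this
    obtain ⟨g, hg⟩ := this
    exact ⟨g, hg⟩
  -- the kernel of `f` is contained in the kernel of `ψ`
  have hker : ∀ g : Polynomial R, f g = 0 → ψ g = 0 := by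
    intro g hg
    have h1 : Polynomial.aeval w g = 0 := by
      rw [hw, Polynomial.aeval_algebraMap_apply]
      simp only [hf, AlgHom.toRingHom_eq_coe, RingHom.coe_coe] at hg
      rw [hg, map_zero]
    have h2 : Polynomial.aeval w (g.map (algebraMap R E)) = 0 := by
      rwa [Polynomial.aeval_map_algebraMap]
    have h3 : minpoly E w ∣ g.map (algebraMap R E) := minpoly.dvd E w h2
    rw [← hirr] at h3
    have h4 : p ∣ g :=
      (Polynomial.map_dvd_map (algebraMap R E) (IsFractionRing.injective R E) hp).mp h3
    obtain ⟨c, rfl⟩ := h4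
    have hψp : ψ p = 0 := by
      rw [hψapp, AdjoinRoot.mk_eq_zero]
      exact hqdvd
    rw [map_mul, hψp, zero_mul]
  -- lift `ψ` along `f`
  set finv : S → Polynomial R := Function.surjInv hfsurj with hfinv
  have hrinv : Function.RightInverse finv f := Function.rightInverse_surjInv hfsurj
  set φ : S →+* Fbar := f.liftOfRightInverse finv hrinv ⟨ψ, hker⟩ with hφ
  have hφf : ∀ g : Polynomial R, φ (f g) = ψ g := fun g =>
    f.liftOfRightInverse_comp_apply finv hrinv ⟨ψ, hker⟩ g
  have hφz : φ z = AdjoinRoot.root q := by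
    have : f Polynomial.X = z := by simp [hf]
    rw [← this, hφf, hψapp]
    simp [AdjoinRoot.mk_X]
  have hψsurj : Function.Surjective ψ := by
    intro x
    obtain ⟨h, rfl⟩ := AdjoinRoot.mk_surjective (g := q) x
    obtain ⟨g, rfl⟩ := Polynomial.map_surjective φ₀ hφ₀ h
    exact ⟨g, rfl⟩
  have hφsurj : Function.Surjective φ := by
    intro x
    obtain ⟨g, hg⟩ := hψsurj x
    exact ⟨f g, by rw [hφf, hg]⟩
  refine ⟨Fbar, inferInstance, φ, ι, hφsurj, ?_, ?_, ?_⟩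
  · ext r
    have : algebraMap R S r = f (Polynomial.C r) := by simp [hf]
    simp only [RingHom.comp_apply, this, hφf, hψapp, Polynomial.map_C]
    rw [hι, AdjoinRoot.algebraMap_eq]
    rfl
  · rw [hφz, hι, ← Polynomial.aeval_def]
    have : (Polynomial.aeval (AdjoinRoot.root q)) pbar = AdjoinRoot.mk q pbar := by
      exact AdjoinRoot.aeval_eq pbar
    rw [this, AdjoinRoot.mk_eq_zero]
    exact hqdvd
  · have key : ∀ x : Fbar, x ∈ Subfield.closure (Set.range ⇑ι ∪ {φ z}) := by
      intro x
      have hx : x ∈ Algebra.adjoin Ebar {AdjoinRoot.root q} := by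
        rw [AdjoinRoot.adjoinRoot_eq_top]; trivial
      induction hx using Algebra.adjoin_induction with
      | mem y hy =>
        apply Subfield.subset_closure
        right
        simpa [hφz] using hy
      | algebraMap a =>
        apply Subfield.subset_closure
        left
        exact ⟨a, rfl⟩
      | add _ _ _ _ ha hb => exact add_mem ha hb
      | mul _ _ _ _ ha hb => exact mul_mem ha hb
    rw [eq_top_iff]
    intro x _
    exact key x
end

section
/- Let K(t) be a rational function field over a field K and F₀/K(t) a finite Galois extension with F₀ regular over K (i.e., K algebraically closed in F₀ and F₀/K separable). Let x ∈ F₀ be integral over K[t] with F₀ = K(t,x), and g ∈ K[T,X] monic in X with g(t,X) = irr(x, K(t)). If b ∈ K satisfies discr(g(b,X)) ≠ 0 and g(b,X) is irreducible over K, then K adjoined a root of g(b,X) is a Galois extension of K of degree [F₀ : K(t)] with Galois group isomorphic to Gal(F₀/K(t)). -/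
open Polynomial in
/-- Span descent: if the `A`-algebra structure on `V` factors through `K`, then an
`A`-spanning set is `K`-spanning. -/
private lemma span_top_of_spanA_aux {K A V : Type*} [Field K] [CommRing A] [CommRing V]
    [Algebra K V] [Algebra A V] (f : A →+* K)
    (hf : algebraMap A V = (algebraMap K V).comp f) {s : Set V}
    (h : Submodule.span A s = ⊤) : Submodule.span K s = ⊤ := by
  rw [eq_top_iff]
  rintro v -
  have hv : v ∈ Submodule.span A s := h ▸ Submodule.mem_top
  refine Submodule.span_induction (fun x hx => Submodule.subset_span hx)
    (Submodule.zero_mem _) (fun x y _ _ hx hy => Submodule.add_mem _ hx hy)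
    (fun a x _ hx => ?_) hv
  have hax : a • x = f a • x := by
    rw [Algebra.smul_def, Algebra.smul_def, hf, RingHom.comp_apply]
  rw [hax]
  exact Submodule.smul_mem _ _ hx

set_option maxHeartbeats 3200000 in
set_option synthInstance.maxHeartbeats 400000 in
open IntermediateField Polynomial in
/-- Specialization step: let `F₀/K(t)` be finite Galois with `F₀` regular over `K`
(`K` algebraically closed in `F₀` and `F₀/K` separable), `x` integral over `K[t]` with
`F₀ = K(t,x)`, and `g ∈ K[T,X]` monic in `X` with `g(t,X) = irr(x,K(t))`. If `b ∈ K` is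
such that `g(b,X)` has nonzero discriminant (i.e. is separable) and is irreducible over
`K`, then adjoining to `K` a root of `g(b,X)` produces a Galois extension of `K` of degree
`[F₀ : K(t)]` with Galois group isomorphic to `Gal(F₀/K(t))`. -/
theorem specialization_galois (K : Type*) [Field K]
    (F₀ : Type*) [Field F₀] [Algebra (RatFunc K) F₀]
    [IsGalois (RatFunc K) F₀] [FiniteDimensional (RatFunc K) F₀]
    [Algebra K F₀] [IsScalarTower K (RatFunc K) F₀]
    [Algebra (Polynomial K) F₀] [IsScalarTower (Polynomial K) (RatFunc K) F₀]
    -- `F₀` is regular over `K`: `K` is algebraically closed in `F₀` ...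
    (hreg : ∀ y : F₀, IsAlgebraic K y → y ∈ (algebraMap K F₀).range)
    -- ... and `F₀/K` is separable (every element of `F₀` algebraic over `K` is separable)
    (hsep : ∀ y : F₀, IsAlgebraic K y → IsSeparable K y)
    (x : F₀) (hxint : IsIntegral (Polynomial K) x)
    (hF₀ : adjoin (RatFunc K) {x} = ⊤)
    (g : Polynomial (Polynomial K)) (hg : g.Monic)
    (hirr : g.map (algebraMap (Polynomial K) (RatFunc K)) = minpoly (RatFunc K) x)
    (b : K)
    (hdisc : (g.map (evalRingHom b)).Separable)
    (hirrb : Irreducible (g.map (evalRingHom b))) :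
    ∀ (L : Type*) [Field L] [Algebra K L] (y : L), aeval y (g.map (evalRingHom b)) = 0 →
      IsGalois K (adjoin K {y}) ∧
      Module.finrank K (adjoin K {y}) = Module.finrank (RatFunc K) F₀ ∧
      Nonempty ((adjoin K {y} ≃ₐ[K] adjoin K {y}) ≃* (F₀ ≃ₐ[RatFunc K] F₀)) := by
  classical
  intro L _ _ y hy
  haveI hKAF : IsScalarTower K (Polynomial K) F₀ :=
    IsScalarTower.of_algebraMap_eq fun k => by
      rw [IsScalarTower.algebraMap_apply K (RatFunc K) F₀,
        IsScalarTower.algebraMap_apply K (Polynomial K) (RatFunc K),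
        ← IsScalarTower.algebraMap_apply (Polynomial K) (RatFunc K) F₀]
  -- ## Degrees
  have hxKt : IsIntegral (RatFunc K) x := IsIntegral.of_finite _ x
  set n := g.natDegree with hn
  have hminn : (minpoly (RatFunc K) x).natDegree = n := by
    rw [← hirr, hg.natDegree_map]
  have hnF : Module.finrank (RatFunc K) F₀ = n := by
    rw [← IntermediateField.finrank_top', ← hF₀, IntermediateField.adjoin.finrank hxKt, hminn]
  set gb := g.map (evalRingHom b) with hgbdef
  have hgbmonic : gb.Monic := hg.map _
  have hgbdeg : gb.natDegree = n := hg.natDegree_map _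
  have hgbne : gb ≠ 0 := hgbmonic.ne_zero
  have hymin : minpoly K y = gb := (minpoly.eq_of_irreducible_of_monic hirrb hy hgbmonic).symm
  have hyint : IsIntegral K y := ⟨gb, hgbmonic, by rwa [← aeval_def]⟩
  -- ## Splitting of `g` over `F₀`
  set gF := g.map (algebraMap (Polynomial K) F₀) with hgFdef
  have hmapeq : gF = (minpoly (RatFunc K) x).map (algebraMap (RatFunc K) F₀) := by
    rw [← hirr, Polynomial.map_map, ← IsScalarTower.algebraMap_eq]
  have hgFsplits : Splits gF := by
    rw [hmapeq]
    exact Normal.splits inferInstance x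
  have hgFsep : gF.Separable := by
    rw [hmapeq]
    exact Polynomial.Separable.map (Algebra.IsSeparable.isSeparable (RatFunc K) x)
  have hgFmonic : gF.Monic := hg.map _
  have hgFne : gF ≠ 0 := hgFmonic.ne_zero
  have hnodup : gF.roots.Nodup := nodup_roots hgFsep
  set Rset := gF.roots.toFinset with hRsetdef
  have hRval : (Rset.1 : Multiset F₀) = gF.roots := Multiset.dedup_eq_self.mpr hnodup
  have hroot_iff : ∀ r : F₀, r ∈ Rset ↔ (Polynomial.aeval r) g = 0 := by
    intro r
    rw [hRsetdef, Multiset.mem_toFinset, mem_roots hgFne, IsRoot.def, hgFdef, eval_map,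
      ← aeval_def]
  have hxroot : x ∈ Rset := by
    rw [hroot_iff]
    rw [← Polynomial.aeval_map_algebraMap (RatFunc K) x g, hirr, minpoly.aeval]
  -- ## The ring `S = K[t][roots]`
  set S := Algebra.adjoin (Polynomial K) (Rset : Set F₀) with hSdef
  have hmemS : ∀ r ∈ Rset, r ∈ S := fun r hr => Algebra.subset_adjoin hr
  have hintroot : ∀ r ∈ (Rset : Set F₀), IsIntegral (Polynomial K) r := by
    intro r hr
    refine ⟨g, hg, ?_⟩
    have := (hroot_iff r).mp hr
    rwa [aeval_def] at this
  haveI hSfin : Module.Finite (Polynomial K) S :=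
    Module.Finite.iff_fg.mpr (fg_adjoin_of_finite Rset.finite_toSet hintroot)
  have hinjAF : Function.Injective (algebraMap (Polynomial K) F₀) := by
    rw [IsScalarTower.algebraMap_eq (Polynomial K) (RatFunc K) F₀]
    exact (algebraMap (RatFunc K) F₀).injective.comp (IsFractionRing.injective _ _)
  have hinjAS : Function.Injective (algebraMap (Polynomial K) S) := by
    intro a a' haa
    apply hinjAF
    have h6 : (algebraMap S F₀) (algebraMap (Polynomial K) S a)
        = (algebraMap S F₀) (algebraMap (Polynomial K) S a') := by rw [haa]
    rwa [← IsScalarTower.algebraMap_apply, ← IsScalarTower.algebraMap_apply] at h6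
  haveI : NoZeroSMulDivisors (Polynomial K) S :=
    ⟨fun {a s} h => by
      rw [Algebra.smul_def, mul_eq_zero] at h
      exact h.imp_left fun h' => (map_eq_zero_iff _ hinjAS).mp h'⟩
  haveI : Module.Free (Polynomial K) S := inferInstance
  set ι := Module.Free.ChooseBasisIndex (Polynomial K) ↥S with hιdef
  set 𝔅 := Module.Free.chooseBasis (Polynomial K) ↥S with h𝔅def
  -- rank of `S` over `K[t]` is at most `n`
  have hli : LinearIndependent (Polynomial K) (fun i : ι => ((𝔅 i : S) : F₀)) :=
    𝔅.linearIndependent.map' (Subalgebra.toSubmodule S).subtype (Submodule.ker_subtype _)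
  have hliKt : LinearIndependent (RatFunc K) (fun i : ι => ((𝔅 i : S) : F₀)) :=
    (LinearIndependent.iff_fractionRing (Polynomial K) (RatFunc K)).mp hli
  have hrle : Fintype.card ι ≤ n := hnF ▸ hliKt.fintype_card_le_finrank
  -- ## The specialized algebra `V = S/(t-b)S`
  set c : S := algebraMap (Polynomial K) S (X - C b) with hcdef
  set pS : Ideal S := Ideal.span {c} with hpSdef
  have hmkalg : algebraMap (Polynomial K) (S ⧸ pS)
      = (Ideal.Quotient.mk pS).comp (algebraMap (Polynomial K) S) := rfl
  have hczero : (Ideal.Quotient.mk pS) c = 0 :=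
    Ideal.Quotient.eq_zero_iff_mem.mpr (Ideal.subset_span (Set.mem_singleton _))
  have halg : algebraMap (Polynomial K) (S ⧸ pS)
      = (algebraMap K (S ⧸ pS)).comp (evalRingHom b) := by
    apply Polynomial.ringHom_ext
    · intro a
      rw [RingHom.comp_apply, coe_evalRingHom, eval_C,
        IsScalarTower.algebraMap_apply K (Polynomial K) (S ⧸ pS), Polynomial.algebraMap_eq]
    · rw [RingHom.comp_apply, coe_evalRingHom, eval_X]
      have h2 : (algebraMap (Polynomial K) (S ⧸ pS)) (X - C b) = 0 := by
        rw [hmkalg, RingHom.comp_apply, ← hcdef, hczero]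
      have h3 : (algebraMap (Polynomial K) (S ⧸ pS)) X
          = (algebraMap (Polynomial K) (S ⧸ pS)) (C b) := by
        rwa [map_sub, sub_eq_zero] at h2
      rw [h3, IsScalarTower.algebraMap_apply K (Polynomial K) (S ⧸ pS),
        Polynomial.algebraMap_eq]
  -- `V` is spanned over `K` by the images of a basis of `S`
  have hspanA : Submodule.span (Polynomial K)
      (Set.range fun i : ι => Ideal.Quotient.mk pS (𝔅 i)) = ⊤ := by
    have h1 : (Set.range fun i : ι => Ideal.Quotient.mk pS (𝔅 i))
        = (Ideal.Quotient.mkₐ (Polynomial K) pS).toLinearMap '' Set.range 𝔅 := by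
      rw [← Set.range_comp]; rfl
    rw [h1, ← Submodule.map_span, 𝔅.span_eq, Submodule.map_top, LinearMap.range_eq_top]
    exact Ideal.Quotient.mkₐ_surjective (Polynomial K) (I := pS)
  have hspanK : Submodule.span K
      (Set.range fun i : ι => Ideal.Quotient.mk pS (𝔅 i)) = ⊤ :=
    (span_top_of_spanA_aux (V := S ⧸ pS) (evalRingHom b) halg hspanA :)
  set T : Finset (S ⧸ pS) := Finset.univ.image (fun i : ι => Ideal.Quotient.mk pS (𝔅 i))
    with hTdef
  have hTcoe : (T : Set (S ⧸ pS)) = Set.range fun i : ι => Ideal.Quotient.mk pS (𝔅 i) := by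
    rw [hTdef, Finset.coe_image, Finset.coe_univ, Set.image_univ]
  have hTspan : Submodule.span K (T : Set (S ⧸ pS)) = ⊤ := by rw [hTcoe]; exact hspanK
  haveI hVfd : Module.Finite K (S ⧸ pS) := ⟨⟨T, hTspan⟩⟩
  have hdimV : Module.finrank K (S ⧸ pS) ≤ n := by
    calc Module.finrank K (S ⧸ pS)
        = Module.finrank K ↥(⊤ : Submodule K (S ⧸ pS)) := (finrank_top _ _).symm
      _ = Module.finrank K ↥(Submodule.span K (T : Set (S ⧸ pS))) := by rw [hTspan]
      _ ≤ T.card := finrank_span_finset_le_card T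
      _ ≤ Fintype.card ι := Finset.card_image_le.trans (le_of_eq Finset.card_univ)
      _ ≤ n := hrle
  -- `V` is nontrivial
  have hpSne : pS ≠ ⊤ := by
    intro htop
    have hcu : IsUnit c := by
      rw [hpSdef, Ideal.span_singleton_eq_top] at htop; exact htop
    obtain ⟨s, hs⟩ := IsUnit.exists_right_inv hcu
    have hs1 : (algebraMap S F₀) c * (algebraMap S F₀) s = 1 := by
      rw [← map_mul, hs, map_one]
    have hcF : (algebraMap S F₀) c
        = algebraMap (RatFunc K) F₀ (algebraMap (Polynomial K) (RatFunc K) (X - C b)) := by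
      rw [hcdef, ← IsScalarTower.algebraMap_apply,
        IsScalarTower.algebraMap_apply (Polynomial K) (RatFunc K) F₀]
    set u : RatFunc K := algebraMap (Polynomial K) (RatFunc K) (X - C b) with hudef
    have hu0 : u ≠ 0 := by
      rw [hudef]
      simp only [ne_eq, map_eq_zero_iff _ (IsFractionRing.injective (Polynomial K) (RatFunc K))]
      exact X_sub_C_ne_zero b
    have hsval : algebraMap (RatFunc K) F₀ u⁻¹ = (algebraMap S F₀) s := by
      rw [map_inv₀]
      exact inv_eq_of_mul_eq_one_right (by rw [← hcF]; exact hs1)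
    haveI : Algebra.IsIntegral (Polynomial K) S := Algebra.IsIntegral.of_finite _ _
    have hsint : IsIntegral (Polynomial K) ((algebraMap S F₀) s) :=
      (Algebra.IsIntegral.isIntegral (R := Polynomial K) s).map
        (IsScalarTower.toAlgHom (Polynomial K) S F₀)
    rw [← hsval] at hsint
    have huint : IsIntegral (Polynomial K) (u⁻¹) :=
      (isIntegral_algebraMap_iff (algebraMap (RatFunc K) F₀).injective).mp hsint
    obtain ⟨q, hq⟩ := IsIntegrallyClosed.isIntegral_iff.mp huint
    have h7 : algebraMap (Polynomial K) (RatFunc K) ((X - C b) * q) = 1 := by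
      rw [map_mul, hq, ← hudef, mul_inv_cancel₀ hu0]
    have h8 : (X - C b) * q = 1 := by
      apply IsFractionRing.injective (Polynomial K) (RatFunc K)
      rw [h7, map_one]
    exact Polynomial.not_isUnit_X_sub_C b (IsUnit.of_mul_eq_one _ h8)
  haveI : Nontrivial (S ⧸ pS) := Ideal.Quotient.nontrivial_iff.mpr hpSne
  -- ## Factorization of `gb` over `V`
  set ξ : {r // r ∈ Rset} → S := fun r => ⟨(r : F₀), hmemS r r.2⟩ with hξdef
  have hfactF : gF = ∏ r : {r // r ∈ Rset}, (X - C (r : F₀)) := by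
    rw [hgFsplits.eq_prod_roots_of_monic hgFmonic, ← hRval,
      Finset.prod_coe_sort Rset (fun r => X - C r), Finset.prod_eq_multiset_prod]
  have hinjSF : Function.Injective (algebraMap S F₀) := Subtype.coe_injective
  have hfactS : g.map (algebraMap (Polynomial K) S)
      = ∏ r : {r // r ∈ Rset}, (X - C (ξ r)) := by
    apply Polynomial.map_injective (algebraMap S F₀) hinjSF
    rw [Polynomial.map_map, ← IsScalarTower.algebraMap_eq (Polynomial K) S F₀, ← hgFdef,
      Polynomial.map_prod, hfactF]
    apply Finset.prod_congr rfl
    intro r _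
    rw [Polynomial.map_sub, map_X, map_C]
    rfl
  letI : CommRing (S ⧸ pS) := inferInstance
  set w : {r // r ∈ Rset} → (S ⧸ pS) := fun r => Ideal.Quotient.mk pS (ξ r) with hwdef
  have hfactV : gb.map (algebraMap K (S ⧸ pS)) = ∏ r : {r // r ∈ Rset}, (X - C (w r)) := by
    have h1 : g.map (algebraMap (Polynomial K) (S ⧸ pS))
        = ∏ r : {r // r ∈ Rset}, (X - C (w r)) := by
      rw [hmkalg, ← Polynomial.map_map, hfactS, Polynomial.map_prod]
      apply Finset.prod_congr rfl
      intro r _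
      rw [Polynomial.map_sub, map_X, map_C]
    rw [← h1, halg, hgbdef, Polynomial.map_map]
  -- the distinguished root of `gb` in `V`
  set z : S ⧸ pS := w ⟨x, hxroot⟩ with hzdef
  have hz : (aeval z) gb = 0 := by
    rw [aeval_def, ← eval_map, hfactV, eval_prod]
    exact Finset.prod_eq_zero (f := fun j : {r // r ∈ Rset} => eval z (X - C (w j)))
      (Finset.mem_univ ⟨x, hxroot⟩) (by show eval z (X - C (w ⟨x, hxroot⟩)) = 0; rw [eval_sub, eval_X, eval_C, hzdef, sub_self])
  -- ## `V ≃ AdjoinRoot gb` is a field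
  haveI : Fact (Irreducible gb) := ⟨hirrb⟩
  set φ : AdjoinRoot gb →ₐ[K] (S ⧸ pS) := AdjoinRoot.liftAlgHom gb (Algebra.ofId K _) z hz with hφdef
  have hφinj : Function.Injective φ := φ.toRingHom.injective
  set pb := AdjoinRoot.powerBasis hgbne with hpbdef
  haveI : Module.Finite K (AdjoinRoot gb) := pb.finite
  have hWrank : Module.finrank K (AdjoinRoot gb) = n := by
    rw [pb.finrank]
    show gb.natDegree = n
    exact hgbdeg
  have hVrank : Module.finrank K (S ⧸ pS) = n := by
    refine le_antisymm hdimV ?_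
    have h9 := LinearMap.finrank_le_finrank_of_injective (f := φ.toLinearMap) hφinj
    rwa [hWrank] at h9
  have hφbij : Function.Bijective φ :=
    ⟨hφinj, (LinearMap.injective_iff_surjective_of_finrank_eq_finrank
        (f := φ.toLinearMap) (by rw [hWrank, hVrank])).mp hφinj⟩
  have hVfield : IsField (S ⧸ pS) := by
    refine ⟨exists_pair_ne _, fun a b => mul_comm a b, ?_⟩
    intro a ha
    obtain ⟨wa, rfl⟩ := hφbij.2 a
    have hwa : wa ≠ 0 := fun h => ha (by rw [h, map_zero])
    exact ⟨φ wa⁻¹, by rw [← map_mul, mul_inv_cancel₀ hwa, map_one]⟩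
  letI : Field (S ⧸ pS) := hVfield.toField
  set ψ : AdjoinRoot gb ≃ₐ[K] (S ⧸ pS) := AlgEquiv.ofBijective φ hφbij with hψdef
  -- ## `V` is a splitting field of `gb`, hence Galois over `K`
  haveI hsplitV : IsSplittingField K (S ⧸ pS) gb := by
    constructor
    · rw [hfactV]
      exact Splits.prod fun r _ => Splits.X_sub_C _
    · have hz' : z ∈ gb.rootSet (S ⧸ pS) := by
        rw [mem_rootSet]
        exact ⟨hgbne, hz⟩
      have htop : Algebra.adjoin K ({z} : Set (S ⧸ pS)) = ⊤ := by
        have h1 := congrArg (Subalgebra.map φ) (AdjoinRoot.adjoinRoot_eq_top (f := gb))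
        have hr : φ (AdjoinRoot.root gb) = z := AdjoinRoot.liftAlgHom_root _ _ _ _
        rwa [AlgHom.map_adjoin, Set.image_singleton, hr,
          Algebra.map_top, (AlgHom.range_eq_top _).mpr hφbij.2] at h1
      rw [eq_top_iff, ← htop]
      exact Algebra.adjoin_mono (Set.singleton_subset_iff.mpr hz')
  haveI hgal : IsGalois K (S ⧸ pS) := IsGalois.of_separable_splitting_field hdisc
  -- distinctness of the specialized roots
  have hwinj : Function.Injective w := by
    have hsp : (∏ r : {r // r ∈ Rset}, (X - C (w r))).Separable := by
      rw [← hfactV]; exact hdisc.map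
    exact separable_prod_X_sub_C_iff.mp hsp
  -- ## The action of `Gal(F₀/K(t))` on `V`
  have hmapsroot : ∀ (σ : F₀ ≃ₐ[RatFunc K] F₀) (r : F₀), r ∈ Rset → σ r ∈ Rset := by
    intro σ r hr
    rw [hroot_iff] at hr ⊢
    have h1 : (Polynomial.aeval (σ r)) g = σ ((Polynomial.aeval r) g) :=
      Polynomial.aeval_algHom_apply ((AlgEquiv.restrictScalars (Polynomial K) σ).toAlgHom) r g
    rw [h1, hr, map_zero]
  have hSmaps : ∀ (σ : F₀ ≃ₐ[RatFunc K] F₀) (s : F₀), s ∈ S → σ s ∈ S := by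
    intro σ s hs
    have h2 : S.map (AlgEquiv.restrictScalars (Polynomial K) σ).toAlgHom ≤ S := by
      rw [hSdef, AlgHom.map_adjoin]
      apply Algebra.adjoin_mono
      rintro _ ⟨r, hr, rfl⟩
      exact hmapsroot σ r hr
    exact h2 (Subalgebra.mem_map.mpr ⟨s, hs, rfl⟩)
  set σS : (F₀ ≃ₐ[RatFunc K] F₀) → (↥S →ₐ[Polynomial K] (S ⧸ pS)) := fun σ =>
    (Ideal.Quotient.mkₐ (Polynomial K) pS).comp
      (((AlgEquiv.restrictScalars (Polynomial K) σ).toAlgHom.comp S.val).codRestrict S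
        (fun s => hSmaps σ s s.2)) with hσSdef
  have hσSapply : ∀ σ (s : ↥S),
      σS σ s = Ideal.Quotient.mk pS ⟨σ (s : F₀), hSmaps σ s s.2⟩ := fun σ s => rfl
  have hkill : ∀ σ, ∀ a : ↥S, a ∈ pS → σS σ a = 0 := by
    intro σ a ha
    rw [hpSdef, Ideal.mem_span_singleton] at ha
    obtain ⟨d, rfl⟩ := ha
    rw [map_mul]
    have hc : σS σ c = 0 := by
      rw [hσSapply]
      have hcfix : σ ((c : S) : F₀) = ((c : S) : F₀) := by
        have hcval : ((c : S) : F₀) = algebraMap (Polynomial K) F₀ (X - C b) := by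
          rw [hcdef]; exact (IsScalarTower.algebraMap_apply (Polynomial K) S F₀ _).symm
        rw [hcval]
        exact (AlgEquiv.restrictScalars (Polynomial K) σ).commutes _
      have h10 : (⟨σ ((c : S) : F₀), hSmaps σ _ c.2⟩ : ↥S) = c := Subtype.ext hcfix
      rw [h10]
      exact hczero
    rw [hc, zero_mul]
  set Ψ0 : (F₀ ≃ₐ[RatFunc K] F₀) → ((S ⧸ pS) →ₐ[K] (S ⧸ pS)) := fun σ =>
    AlgHom.restrictScalars K (Ideal.Quotient.liftₐ pS (σS σ) (hkill σ)) with hΨ0def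
  have hΨ0mk : ∀ σ (s : ↥S), Ψ0 σ (Ideal.Quotient.mk pS s)
      = Ideal.Quotient.mk pS ⟨σ (s : F₀), hSmaps σ s s.2⟩ := by
    intro σ s
    show Ideal.Quotient.liftₐ pS (σS σ) (hkill σ) (Ideal.Quotient.mk pS s) = _
    exact hσSapply σ s
  have hext : ∀ f h : (S ⧸ pS) →ₐ[K] (S ⧸ pS),
      (∀ s : ↥S, f (Ideal.Quotient.mk pS s) = h (Ideal.Quotient.mk pS s)) → f = h := by
    intro f h hfh
    apply AlgHom.ext
    intro v
    obtain ⟨s, rfl⟩ := Ideal.Quotient.mk_surjective v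
    exact hfh s
  have hone : Ψ0 1 = AlgHom.id K (S ⧸ pS) := by
    apply hext
    intro s
    rw [hΨ0mk]
    exact congrArg _ (Subtype.ext (AlgEquiv.one_apply (s : F₀)))
  have hcomp : ∀ σ τ, (Ψ0 σ).comp (Ψ0 τ) = Ψ0 (σ * τ) := by
    intro σ τ
    apply hext
    intro s
    rw [AlgHom.comp_apply, hΨ0mk, hΨ0mk, hΨ0mk]
    exact congrArg _ (Subtype.ext (AlgEquiv.mul_apply σ τ (s : F₀)).symm)
  set Ψ : (F₀ ≃ₐ[RatFunc K] F₀) →* ((S ⧸ pS) ≃ₐ[K] (S ⧸ pS)) :=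
    { toFun := fun σ => AlgEquiv.ofAlgHom (Ψ0 σ) (Ψ0 σ⁻¹)
        (by rw [hcomp, mul_inv_cancel]; exact hone)
        (by rw [hcomp, inv_mul_cancel]; exact hone)
      map_one' := AlgEquiv.ext fun v => DFunLike.congr_fun hone v
      map_mul' := fun σ τ => AlgEquiv.ext fun v =>
        (DFunLike.congr_fun (hcomp σ τ) v).symm } with hΨdef
  have hΨapp : ∀ σ (s : ↥S), Ψ σ (Ideal.Quotient.mk pS s)
      = Ideal.Quotient.mk pS ⟨σ (s : F₀), hSmaps σ s s.2⟩ := fun σ s => hΨ0mk σ s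
  have hΨinj : Function.Injective Ψ := by
    refine (injective_iff_map_eq_one Ψ).mpr ?_
    intro σ hσ
    have hfix : ∀ r : F₀, r ∈ Rset → σ r = r := by
      intro r hr
      have h1 : Ψ σ (w ⟨r, hr⟩) = w ⟨r, hr⟩ := by rw [hσ]; rfl
      have h2 : Ψ σ (w ⟨r, hr⟩) = w ⟨σ r, hmapsroot σ r hr⟩ := hΨapp σ (ξ ⟨r, hr⟩)
      have h3 : w ⟨σ r, hmapsroot σ r hr⟩ = w ⟨r, hr⟩ := by rw [← h2, h1]
      exact congrArg Subtype.val (hwinj h3)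
    have hx1 : σ x = x := hfix x hxroot
    have hadj : Algebra.adjoin (RatFunc K) ({x} : Set F₀) = ⊤ := by
      have h5 := congrArg IntermediateField.toSubalgebra hF₀
      rwa [IntermediateField.adjoin_simple_toSubalgebra_of_isAlgebraic hxKt.isAlgebraic,
        IntermediateField.top_toSubalgebra] at h5
    apply AlgEquiv.ext
    intro v
    have hv : v ∈ Algebra.adjoin (RatFunc K) ({x} : Set F₀) := hadj ▸ Algebra.mem_top
    have hle : Algebra.adjoin (RatFunc K) ({x} : Set F₀)
        ≤ AlgHom.equalizer σ.toAlgHom (AlgHom.id (RatFunc K) F₀) := by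
      rw [Algebra.adjoin_le_iff]
      intro a hamem
      rw [Set.mem_singleton_iff] at hamem
      subst hamem
      exact hx1
    exact hle hv
  -- ## Counting
  haveI : FiniteDimensional K (S ⧸ pS) := hVfd
  have hcardG : Fintype.card (F₀ ≃ₐ[RatFunc K] F₀) = n := by
    rw [← Nat.card_eq_fintype_card, IsGalois.card_aut_eq_finrank (RatFunc K) F₀, hnF]
  have hcardV : Fintype.card ((S ⧸ pS) ≃ₐ[K] (S ⧸ pS)) = n := by
    rw [← Nat.card_eq_fintype_card, IsGalois.card_aut_eq_finrank K (S ⧸ pS), hVrank]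
  have hΨbij : Function.Bijective Ψ := by
    rw [Fintype.bijective_iff_injective_and_card]
    exact ⟨hΨinj, by rw [hcardG, hcardV]⟩
  -- ## Conclusion
  have e1 : AdjoinRoot (minpoly K y) ≃ₐ[K] ↥(adjoin K {y}) := adjoinRootEquivAdjoin K hyint
  rw [hymin] at e1
  have ε : ↥(adjoin K {y}) ≃ₐ[K] (S ⧸ pS) := e1.symm.trans ψ
  refine ⟨IsGalois.of_algEquiv ε.symm, ?_, ?_⟩
  · rw [ε.toLinearEquiv.finrank_eq, hVrank, hnF]
  · exact ⟨(AlgEquiv.autCongr ε).trans (MulEquiv.ofBijective Ψ hΨbij).symm⟩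
end
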